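/- Let F = (f, g, h) be a GSWF on three alternatives with n voters satisfying the IIA condition. Then the probability of a non-transitive outcome satisfies P(F) = ⟨T_{1/3} f′, g⟩ + ⟨T_{1/3} ḡ, 1−h⟩ − ⟨T_{1/3} f′, 1−h⟩. -/

import Mathlib

open Finset

noncomputable section

/-- The discrete cube `{0,1}^n`. -/
abbrev Cube (n : ℕ) := Fin n → Bool

/-- Inner product of real-valued functions on the cube w.r.t. the uniform measure. -/
def cInner (n : ℕ) (f g : Cube n → ℝ) : ℝ :=
  (∑ x : Cube n, f x * g x) / 2 ^ n

/-- Expectation w.r.t. the uniform measure on the cube. -/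
def cExp (n : ℕ) (f : Cube n → ℝ) : ℝ :=
  (∑ x : Cube n, f x) / 2 ^ n

/-- The Walsh character `r_S`. -/
def walsh (n : ℕ) (S : Finset (Fin n)) : Cube n → ℝ :=
  fun x => ∏ i ∈ S, (2 * (if x i then (1 : ℝ) else 0) - 1)

/-- Fourier–Walsh coefficient of `f` at `S`. -/
def fcoef (n : ℕ) (f : Cube n → ℝ) (S : Finset (Fin n)) : ℝ :=
  cInner n f (walsh n S)

/-- Real-valued version of a Boolean function. -/
def BR (n : ℕ) (f : Cube n → Bool) : Cube n → ℝ :=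
  fun x => if f x then 1 else 0

/-- The noise operator `T_ρ`. -/
def noiseOp (n : ℕ) (ρ : ℝ) (f : Cube n → ℝ) : Cube n → ℝ :=
  fun x => ∑ S : Finset (Fin n), ρ ^ S.card * fcoef n f S * walsh n S x

/-- `f′(x) = f(1-x₁,…,1-xₙ)`. -/
def flipB (n : ℕ) (f : Cube n → Bool) : Cube n → Bool :=
  fun x => f (fun i => !(x i))

/-- The dual function `f̄(x) = 1 - f(1-x₁,…,1-xₙ)`. -/
def dualB (n : ℕ) (f : Cube n → Bool) : Cube n → Bool :=
  fun x => !(f (fun i => !(x i)))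

/-- `1 - f`. -/
def notB (n : ℕ) (f : Cube n → Bool) : Cube n → Bool :=
  fun x => !(f x)

/-- A triple `(x,y,z)` of preference vectors comes from a profile of linear orders
on three alternatives iff no coordinate is cyclic, i.e. `¬(x k = y k = z k)` for all `k`. -/
def Profile3Ok (n : ℕ) (x y z : Cube n) : Prop :=
  ∀ k, ¬ (x k = y k ∧ y k = z k)

/-- Probability of a non-transitive outcome for the IIA GSWF on three alternatives
given by pairwise choice functions `f, g, h`, for a uniformly random profile. -/
def PF3 (n : ℕ) (f g h : Cube n → Bool) : ℝ :=
  (Nat.card {p : Cube n × Cube n × Cube n //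
      Profile3Ok n p.1 p.2.1 p.2.2 ∧ f p.1 = g p.2.1 ∧ g p.2.1 = h p.2.2} : ℝ) / 6 ^ n

namespace KalaiAux

set_option maxHeartbeats 1000000

instance (n : ℕ) (x y z : Cube n) : Decidable (Profile3Ok n x y z) := by
  unfold Profile3Ok; infer_instance

/-- indicator of admissible profiles -/
def okInd (n : ℕ) (x y z : Cube n) : ℝ := if Profile3Ok n x y z then 1 else 0

/-- the per-pair weight -/
def V (n : ℕ) (x y : Cube n) : ℝ := ∏ i, (if x i = y i then (1:ℝ) else 2)

lemma okInd_eq_prod (n : ℕ) (x y z : Cube n) :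
    okInd n x y z = ∏ k, (if x k = y k ∧ y k = z k then (0:ℝ) else 1) := by
  unfold okInd
  by_cases h : Profile3Ok n x y z
  · rw [if_pos h, eq_comm, Finset.prod_eq_one]
    intro k _; rw [if_neg (h k)]
  · rw [if_neg h]
    unfold Profile3Ok at h
    push_neg at h
    obtain ⟨k, hk⟩ := h
    exact (Finset.prod_eq_zero (mem_univ k) (by rw [if_pos hk])).symm

lemma sum_z_okInd (n : ℕ) (x y : Cube n) :
    ∑ z : Cube n, okInd n x y z = V n x y := by
  have key := Finset.prod_univ_sum (fun _ : Fin n => (univ : Finset Bool))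
    (fun k b => if x k = y k ∧ y k = b then (0:ℝ) else 1)
  rw [Fintype.piFinset_univ] at key
  rw [Finset.sum_congr rfl (fun z _ => okInd_eq_prod n x y z), ← key]
  refine Finset.prod_congr rfl fun k _ => ?_
  cases hx : x k <;> cases hy : y k <;>
    simp [Fintype.sum_bool, hx, hy]

lemma sum_x_okInd (n : ℕ) (y z : Cube n) :
    ∑ x : Cube n, okInd n x y z = V n y z := by
  have key := Finset.prod_univ_sum (fun _ : Fin n => (univ : Finset Bool))
    (fun k a => if a = y k ∧ y k = z k then (0:ℝ) else 1)
  rw [Fintype.piFinset_univ] at key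
  rw [Finset.sum_congr rfl (fun x _ => okInd_eq_prod n x y z), ← key]
  refine Finset.prod_congr rfl fun k _ => ?_
  cases hy : y k <;> cases hz : z k <;>
    simp [Fintype.sum_bool, hy, hz]

lemma sum_y_okInd (n : ℕ) (x z : Cube n) :
    ∑ y : Cube n, okInd n x y z = V n x z := by
  have key := Finset.prod_univ_sum (fun _ : Fin n => (univ : Finset Bool))
    (fun k b => if x k = b ∧ b = z k then (0:ℝ) else 1)
  rw [Fintype.piFinset_univ] at key
  rw [Finset.sum_congr rfl (fun y _ => okInd_eq_prod n x y z), ← key]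
  refine Finset.prod_congr rfl fun k _ => ?_
  cases hx : x k <;> cases hz : z k <;>
    simp [Fintype.sum_bool, hx, hz]

/-- the noise kernel at ρ = 1/3 -/
lemma kernel_eq (n : ℕ) (x y : Cube n) :
    ∑ S : Finset (Fin n), (1/3:ℝ) ^ S.card * walsh n S x * walsh n S y
      = ∏ i, (if x i = y i then (4/3:ℝ) else 2/3) := by
  have h1 : ∀ i : Fin n, (if x i = y i then (4/3:ℝ) else 2/3)
      = (1/3) * ((2 * (if x i then (1:ℝ) else 0) - 1) * (2 * (if y i then (1:ℝ) else 0) - 1)) + 1 := by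
    intro i; cases hx : x i <;> cases hy : y i <;> simp [hx, hy] <;> norm_num
  rw [Finset.prod_congr rfl (fun i _ => h1 i), Finset.prod_add, Finset.powerset_univ]
  refine Finset.sum_congr rfl fun S _ => ?_
  rw [Finset.prod_const_one, mul_one]
  rw [Finset.prod_mul_distrib, Finset.prod_mul_distrib, Finset.prod_const]
  unfold walsh
  ring

/-- ⟨T_{1/3}F, G⟩ as a double sum with the equal→2 kernel -/
lemma inner_noise (n : ℕ) (F G : Cube n → ℝ) :
    cInner n (noiseOp n (1/3) F) G
      = (∑ x : Cube n, ∑ y : Cube n,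
          F x * G y * ∏ i, (if x i = y i then (2:ℝ) else 1)) / 6 ^ n := by
  have e2 : (0:ℝ) < 2 ^ n := by positivity
  have e6 : (6:ℝ) ^ n ≠ 0 := pow_ne_zero n (by norm_num)
  have step1 : cInner n (noiseOp n (1/3) F) G
      = ∑ S : Finset (Fin n), (1/3:ℝ) ^ S.card * fcoef n F S * fcoef n G S := by
    unfold cInner noiseOp
    simp only [Finset.sum_mul]
    rw [Finset.sum_comm, Finset.sum_div]
    refine Finset.sum_congr rfl fun S _ => ?_
    have hG : fcoef n G S = (∑ x : Cube n, G x * walsh n S x) / 2 ^ n := rfl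
    rw [hG, ← mul_div_assoc]
    congr 1
    rw [Finset.mul_sum]
    refine Finset.sum_congr rfl fun x _ => ?_
    ring
  rw [step1]
  have step2 : ∀ S : Finset (Fin n),
      (1/3:ℝ) ^ S.card * fcoef n F S * fcoef n G S
        = (∑ x : Cube n, ∑ y : Cube n,
            F x * G y * ((1/3:ℝ) ^ S.card * walsh n S x * walsh n S y)) / (2^n * 2^n) := by
    intro S
    have hF : fcoef n F S = (∑ x : Cube n, F x * walsh n S x) / 2 ^ n := rfl
    have hG : fcoef n G S = (∑ y : Cube n, G y * walsh n S y) / 2 ^ n := rfl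
    rw [hF, hG]
    have hrw : (1/3:ℝ) ^ S.card * ((∑ x : Cube n, F x * walsh n S x) / 2 ^ n)
        * ((∑ y : Cube n, G y * walsh n S y) / 2 ^ n)
        = ((1/3:ℝ) ^ S.card * ((∑ x : Cube n, F x * walsh n S x)
            * (∑ y : Cube n, G y * walsh n S y))) / (2^n * 2^n) := by
      field_simp
      try ring_nf
      try exact Or.inl trivial
    rw [hrw]
    congr 1
    rw [Finset.sum_mul_sum, Finset.mul_sum]
    refine Finset.sum_congr rfl fun x _ => ?_
    rw [Finset.mul_sum]
    refine Finset.sum_congr rfl fun y _ => ?_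
    ring
  rw [Finset.sum_congr rfl (fun S _ => step2 S), ← Finset.sum_div]
  rw [Finset.sum_comm]
  have step3 : ∀ x : Cube n,
      ∑ S : Finset (Fin n), ∑ y : Cube n,
          F x * G y * ((1/3:ℝ) ^ S.card * walsh n S x * walsh n S y)
        = ∑ y : Cube n, F x * G y * ∏ i, (if x i = y i then (4/3:ℝ) else 2/3) := by
    intro x
    rw [Finset.sum_comm]
    refine Finset.sum_congr rfl fun y _ => ?_
    rw [← kernel_eq n x y, Finset.mul_sum]
  rw [Finset.sum_congr rfl (fun x _ => step3 x)]
  have step4 : ∀ x y : Cube n,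
      (∏ i, (if x i = y i then (4/3:ℝ) else 2/3))
        = (2/3:ℝ)^n * ∏ i, (if x i = y i then (2:ℝ) else 1) := by
    intro x y
    have hc : ((2:ℝ)/3)^n = ∏ _i : Fin n, ((2:ℝ)/3) := by
      rw [Finset.prod_const, Finset.card_univ, Fintype.card_fin]
    rw [hc, ← Finset.prod_mul_distrib]
    refine Finset.prod_congr rfl fun i _ => ?_
    by_cases hxy : x i = y i <;> simp [hxy] <;> norm_num
  have hpow : (2/3:ℝ)^n * (6:ℝ)^n = (2:ℝ)^n * 2^n := by
    rw [← mul_pow, ← mul_pow]; norm_num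
  rw [div_eq_div_iff (by positivity) (by positivity), Finset.sum_mul, Finset.sum_mul]
  refine Finset.sum_congr rfl fun x _ => ?_
  rw [Finset.sum_mul, Finset.sum_mul]
  refine Finset.sum_congr rfl fun y _ => ?_
  rw [step4]
  linear_combination (F x * G y * ∏ i, (if x i = y i then (2:ℝ) else 1)) * hpow

lemma flip_invol (n : ℕ) : Function.Involutive (fun (x : Cube n) (i : Fin n) => !(x i)) := by
  intro x; funext i; simp

lemma K2_eq_V_flip (n : ℕ) (x y : Cube n) :
    (∏ i, if x i = y i then (2:ℝ) else 1) = V n (fun i => !(x i)) y := by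
  unfold V
  refine Finset.prod_congr rfl fun i _ => ?_
  cases hx : x i <;> cases hy : y i <;> simp [hx, hy]

lemma term_eq (n : ℕ) (F G : Cube n → ℝ) :
    (∑ x : Cube n, ∑ y : Cube n,
        F (fun i => !(x i)) * G y * ∏ i, (if x i = y i then (2:ℝ) else 1))
      = ∑ x : Cube n, ∑ y : Cube n, F x * G y * V n x y := by
  refine Fintype.sum_bijective (fun (x : Cube n) (i : Fin n) => !(x i))
    (flip_invol n).bijective _ _ fun x => ?_
  refine Finset.sum_congr rfl fun y _ => ?_
  rw [K2_eq_V_flip]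

lemma BR_flipB (n : ℕ) (f : Cube n → Bool) (x : Cube n) :
    BR n (flipB n f) x = BR n f (fun i => !(x i)) := rfl

lemma BR_dualB (n : ℕ) (g : Cube n → Bool) (y : Cube n) :
    BR n (dualB n g) y = 1 - BR n g (fun i => !(y i)) := by
  unfold BR dualB
  cases hg : g (fun i => !(y i)) <;> simp [hg]

lemma BR_notB (n : ℕ) (h : Cube n → Bool) (z : Cube n) :
    BR n (notB n h) z = 1 - BR n h z := by
  unfold BR notB
  cases hh : h z <;> simp [hh]

lemma t1_eq (n : ℕ) (f g : Cube n → Bool) :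
    cInner n (noiseOp n (1/3) (BR n (flipB n f))) (BR n g)
      = (∑ x : Cube n, ∑ y : Cube n, BR n f x * BR n g y * V n x y) / 6 ^ n := by
  rw [inner_noise]
  congr 1
  rw [← term_eq n (BR n f) (BR n g)]
  exact Finset.sum_congr rfl fun x _ => Finset.sum_congr rfl fun y _ => by rw [BR_flipB]

lemma t2_eq (n : ℕ) (g h : Cube n → Bool) :
    cInner n (noiseOp n (1/3) (BR n (dualB n g))) (BR n (notB n h))
      = (∑ y : Cube n, ∑ z : Cube n,
          (1 - BR n g y) * (1 - BR n h z) * V n y z) / 6 ^ n := by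
  rw [inner_noise]
  congr 1
  rw [← term_eq n (fun y => 1 - BR n g y) (fun z => 1 - BR n h z)]
  refine Finset.sum_congr rfl fun y _ => Finset.sum_congr rfl fun z _ => ?_
  rw [BR_dualB, BR_notB]

lemma t3_eq (n : ℕ) (f h : Cube n → Bool) :
    cInner n (noiseOp n (1/3) (BR n (flipB n f))) (BR n (notB n h))
      = (∑ x : Cube n, ∑ z : Cube n,
          BR n f x * (1 - BR n h z) * V n x z) / 6 ^ n := by
  rw [inner_noise]
  congr 1
  rw [← term_eq n (BR n f) (fun z => 1 - BR n h z)]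
  refine Finset.sum_congr rfl fun x _ => Finset.sum_congr rfl fun z _ => ?_
  rw [BR_notB, BR_flipB]

lemma eqInd_eq (n : ℕ) (f g h : Cube n → Bool) (x y z : Cube n) :
    (if f x = g y ∧ g y = h z then (1:ℝ) else 0)
      = BR n f x * BR n g y + BR n g y * BR n h z + BR n h z * BR n f x
        + 1 - BR n f x - BR n g y - BR n h z := by
  unfold BR
  cases hf : f x <;> cases hg : g y <;> cases hh : h z <;>
    simp [hf, hg, hh] <;> norm_num

lemma e1 (n : ℕ) (A B : Cube n → ℝ) :
    ∑ x : Cube n, ∑ y : Cube n, ∑ z : Cube n, A x * B y * okInd n x y z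
      = ∑ x : Cube n, ∑ y : Cube n, A x * B y * V n x y := by
  refine Finset.sum_congr rfl fun x _ => Finset.sum_congr rfl fun y _ => ?_
  rw [← Finset.mul_sum, sum_z_okInd]

lemma e2 (n : ℕ) (B C : Cube n → ℝ) :
    ∑ x : Cube n, ∑ y : Cube n, ∑ z : Cube n, B y * C z * okInd n x y z
      = ∑ y : Cube n, ∑ z : Cube n, B y * C z * V n y z := by
  rw [Finset.sum_comm]
  refine Finset.sum_congr rfl fun y _ => ?_
  rw [Finset.sum_comm]
  refine Finset.sum_congr rfl fun z _ => ?_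
  rw [← Finset.mul_sum]
  congr 1
  exact sum_x_okInd n y z

lemma e3 (n : ℕ) (A C : Cube n → ℝ) :
    ∑ x : Cube n, ∑ y : Cube n, ∑ z : Cube n, A x * C z * okInd n x y z
      = ∑ x : Cube n, ∑ z : Cube n, A x * C z * V n x z := by
  refine Finset.sum_congr rfl fun x _ => ?_
  rw [Finset.sum_comm]
  refine Finset.sum_congr rfl fun z _ => ?_
  rw [← Finset.mul_sum]
  congr 1
  exact sum_y_okInd n x z

lemma main_sum (n : ℕ) (A B C : Cube n → ℝ) :
    ∑ x : Cube n, ∑ y : Cube n, ∑ z : Cube n,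
        okInd n x y z * (A x * B y + B y * C z + C z * A x + 1 - A x - B y - C z)
      = (∑ x : Cube n, ∑ y : Cube n, A x * B y * V n x y)
        + (∑ y : Cube n, ∑ z : Cube n, (1 - B y) * (1 - C z) * V n y z)
        - (∑ x : Cube n, ∑ z : Cube n, A x * (1 - C z) * V n x z) := by
  rw [← e1 n A B, ← e2 n (fun y => 1 - B y) (fun z => 1 - C z), ← e3 n A (fun z => 1 - C z)]
  rw [← Finset.sum_add_distrib, ← Finset.sum_sub_distrib]
  refine Finset.sum_congr rfl fun x _ => ?_
  rw [← Finset.sum_add_distrib, ← Finset.sum_sub_distrib]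
  refine Finset.sum_congr rfl fun y _ => ?_
  rw [← Finset.sum_add_distrib, ← Finset.sum_sub_distrib]
  refine Finset.sum_congr rfl fun z _ => ?_
  ring

lemma PF3_aux (n : ℕ) (f g h : Cube n → Bool) :
    ((Nat.card {p : Cube n × Cube n × Cube n //
        Profile3Ok n p.1 p.2.1 p.2.2 ∧ f p.1 = g p.2.1 ∧ g p.2.1 = h p.2.2} : ℕ) : ℝ)
      = ∑ x : Cube n, ∑ y : Cube n, ∑ z : Cube n,
          okInd n x y z * (if f x = g y ∧ g y = h z then (1:ℝ) else 0) := by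
  rw [Nat.card_eq_fintype_card, Fintype.card_subtype, Finset.card_filter]
  push_cast
  rw [Fintype.sum_prod_type]
  refine Finset.sum_congr rfl fun x _ => ?_
  rw [Fintype.sum_prod_type]
  refine Finset.sum_congr rfl fun y _ => Finset.sum_congr rfl fun z _ => ?_
  by_cases h1 : Profile3Ok n x y z <;> by_cases h2 : f x = g y ∧ g y = h z <;>
    simp [okInd, h1, h2]

end KalaiAux

open KalaiAux in
/-- `P(F) = ⟨T_{1/3} f′, g⟩ + ⟨T_{1/3} ḡ, 1−h⟩ − ⟨T_{1/3} f′, 1−h⟩`. -/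
theorem kalai_formula_modification1 (n : ℕ) (f g h : Cube n → Bool) :
    PF3 n f g h =
      cInner n (noiseOp n (1 / 3) (BR n (flipB n f))) (BR n g)
      + cInner n (noiseOp n (1 / 3) (BR n (dualB n g))) (BR n (notB n h))
      - cInner n (noiseOp n (1 / 3) (BR n (flipB n f))) (BR n (notB n h)) := by
  rw [t1_eq, t2_eq, t3_eq, ← add_div, div_sub_div_same]
  unfold PF3
  congr 1
  rw [PF3_aux, ← main_sum n (BR n f) (BR n g) (BR n h)]
  exact Finset.sum_congr rfl fun x _ => Finset.sum_congr rfl fun y _ =>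
    Finset.sum_congr rfl fun z _ => by rw [eqInd_eq n f g h x y z]

end
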